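/- Let {Φ_k}_{k∈K} (K a finite index set) be a partition of X into nonempty subsets and let f satisfy ε_k-differential privacy on each Φ_k with ε_k ≥ 0. Then for every observed pseudo-location x' ∈ X with Σ_{y∈X} π(y)f(x'|y) > 0, ExpEr(x') ≥ Σ_{k∈K} Pr(Φ_k|x')·e^{−ε_k}·E'(Φ_k), where Pr(Φ_k|x') = Σ_{x∈Φ_k} Pr(x|x'). -/

import Mathlib

open Finset Real

/-- If {Φ_k} is a partition of X and f satisfies ε_k-DP on each Φ_k,
then for every observed x' with positive denominator,
ExpEr(x') ≥ Σ_k Pr(Φ_k|x')·e^{−ε_k}·E'(Φ_k). -/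
theorem stmt_2 {X : Type*} [Fintype X] [Nonempty X] [MetricSpace X]
    (pr : X → ℝ) (hprpos : ∀ x, 0 < pr x) (hprsum : ∑ x, pr x = 1)
    (f : X → X → ℝ) (hf0 : ∀ x x', 0 ≤ f x x') (hf1 : ∀ x, ∑ x', f x x' = 1)
    {K : Type*} [Fintype K] (Φ : K → Finset X)
    (hne : ∀ k, (Φ k).Nonempty)
    (hdisj : ∀ k l, k ≠ l → Disjoint (Φ k) (Φ l))
    (hcov : ∀ x : X, ∃ k, x ∈ Φ k)
    (ε : K → ℝ) (hε : ∀ k, 0 ≤ ε k)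
    (hDP : ∀ k, ∀ x ∈ Φ k, ∀ y ∈ Φ k, ∀ x' : X, f x x' ≤ Real.exp (ε k) * f y x')
    (x' : X) (hden : 0 < ∑ y, pr y * f y x') :
    ∑ k, (∑ x ∈ Φ k, pr x * f x x' / ∑ y, pr y * f y x') * Real.exp (-(ε k)) *
        (univ.inf' univ_nonempty
          (fun xhat => ∑ x ∈ Φ k, (pr x / ∑ y ∈ Φ k, pr y) * dist xhat x)) ≤
      univ.inf' univ_nonempty
        (fun xhat => ∑ x, (pr x * f x x' / ∑ y, pr y * f y x') * dist xhat x) := by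
  classical
  set D := ∑ y, pr y * f y x' with hD
  rw [Finset.le_inf'_iff]
  intro xhat _
  -- split the RHS sum along the partition
  have huniv : (Finset.univ : Finset X) = (Finset.univ : Finset K).biUnion Φ := by
    ext x
    simp only [Finset.mem_biUnion, Finset.mem_univ, true_and, true_iff]
    exact hcov x
  have hsplit : ∑ x, (pr x * f x x' / D) * dist xhat x
      = ∑ k, ∑ x ∈ Φ k, (pr x * f x x' / D) * dist xhat x := by
    rw [huniv, Finset.sum_biUnion]
    intro a _ b _ hab
    exact hdisj a b hab
  rw [hsplit]
  refine Finset.sum_le_sum fun k _ => ?_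
  set πΦ := ∑ y ∈ Φ k, pr y with hπΦ
  have hπΦpos : 0 < πΦ := Finset.sum_pos (fun y _ => hprpos y) (hne k)
  set S := ∑ y ∈ Φ k, pr y * f y x' with hS
  have hSnn : 0 ≤ S := Finset.sum_nonneg fun y _ =>
    mul_nonneg (hprpos y).le (hf0 y x')
  have hfrac : (∑ x ∈ Φ k, pr x * f x x' / D) = S / D := by
    rw [hS, Finset.sum_div]
  rw [hfrac]
  have hinf : (univ.inf' univ_nonempty
      (fun xhat => ∑ x ∈ Φ k, (pr x / πΦ) * dist xhat x))
      ≤ ∑ x ∈ Φ k, (pr x / πΦ) * dist xhat x :=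
    Finset.inf'_le _ (Finset.mem_univ xhat)
  have hcoef : 0 ≤ S / D * Real.exp (-(ε k)) :=
    mul_nonneg (div_nonneg hSnn hden.le) (Real.exp_pos _).le
  calc S / D * Real.exp (-(ε k)) * (univ.inf' univ_nonempty
          (fun xhat => ∑ x ∈ Φ k, (pr x / πΦ) * dist xhat x))
      ≤ S / D * Real.exp (-(ε k)) * ∑ x ∈ Φ k, (pr x / πΦ) * dist xhat x :=
        mul_le_mul_of_nonneg_left hinf hcoef
    _ = ∑ x ∈ Φ k, (S / D * Real.exp (-(ε k)) * (pr x / πΦ)) * dist xhat x := by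
        rw [Finset.mul_sum]; exact Finset.sum_congr rfl fun x _ => by ring
    _ ≤ ∑ x ∈ Φ k, (pr x * f x x' / D) * dist xhat x := by
        refine Finset.sum_le_sum fun x hx => ?_
        refine mul_le_mul_of_nonneg_right ?_ dist_nonneg
        -- key: S ≤ exp(ε k) * πΦ * f x x'
        have hkey : S ≤ Real.exp (ε k) * πΦ * f x x' := by
          have : S ≤ ∑ y ∈ Φ k, pr y * (Real.exp (ε k) * f x x') := by
            refine Finset.sum_le_sum fun y hy => ?_
            exact mul_le_mul_of_nonneg_left (hDP k y hy x hx x') (hprpos y).le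
          calc S ≤ ∑ y ∈ Φ k, pr y * (Real.exp (ε k) * f x x') := this
            _ = Real.exp (ε k) * πΦ * f x x' := by
                rw [← Finset.sum_mul]; ring
        have h2 : S * (Real.exp (-(ε k)) * pr x / (D * πΦ))
            ≤ (Real.exp (ε k) * πΦ * f x x') * (Real.exp (-(ε k)) * pr x / (D * πΦ)) :=
          mul_le_mul_of_nonneg_right hkey
            (div_pos (mul_pos (Real.exp_pos _) (hprpos x)) (mul_pos hden hπΦpos)).le
        have h3 : (Real.exp (ε k) * πΦ * f x x') * (Real.exp (-(ε k)) * pr x / (D * πΦ))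
            = pr x * f x x' / D := by
          rw [Real.exp_neg]
          field_simp
        have h4 : S / D * Real.exp (-(ε k)) * (pr x / πΦ)
            = S * (Real.exp (-(ε k)) * pr x / (D * πΦ)) := by
          field_simp
        rw [h4]
        linarith [h2, h3.symm ▸ h2]
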